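/- Under the hypotheses of the FRB descent theorem (0 < λ < min{1/(4L), λ_f}, inf(f+g) > −∞), the sequence (H(z_k)) is nonincreasing and convergent, and ∑_{k=0}^∞ ‖z_k − z_{k−1}‖² < ∞; in particular ‖z_k − z_{k−1}‖ → 0 as k → ∞. -/

import Mathlib

open Filter Topology

variable {H : Type*} [NormedAddCommGroup H] [InnerProductSpace ℝ H]

/-- `v` is a Fréchet subgradient of `f` at `x`. -/
def FSubd (f : H → EReal) (x v : H) : Prop :=
  f x ≠ ⊤ ∧ ∀ ε : ℝ, 0 < ε → ∃ δ : ℝ, 0 < δ ∧ ∀ y : H, ‖y - x‖ < δ →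
    f x + (((inner ℝ v (y - x) : ℝ) - ε * ‖y - x‖ : ℝ) : EReal) ≤ f y

/-- `v` is a limiting (Mordukhovich) subgradient of `f` at `x`. -/
def LSubd (f : H → EReal) (x v : H) : Prop :=
  ∃ xs vs : ℕ → H,
    Tendsto xs atTop (nhds x) ∧
    Tendsto (fun k => f (xs k)) atTop (nhds (f x)) ∧
    (∀ k, FSubd f (xs k) (vs k)) ∧
    Tendsto vs atTop (nhds v)

/-- `f` is proper: never `⊥` and finite somewhere. -/
def ProperFn (f : H → EReal) : Prop :=
  (∀ x, f x ≠ ⊥) ∧ ∃ x, f x ≠ ⊤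

/-- The proximal mapping: set of minimizers of `u ↦ f u + (1/(2λ))‖x - u‖²`. -/
def Prox (lam : ℝ) (f : H → EReal) (x : H) : Set H :=
  {y | ∀ u : H, f y + ((1 / (2 * lam) * ‖x - y‖ ^ 2 : ℝ) : EReal)
      ≤ f u + ((1 / (2 * lam) * ‖x - u‖ ^ 2 : ℝ) : EReal)}

/-- `f` is prox-bounded with threshold (at least) `lf`. -/
def ProxBddWith (f : H → EReal) (lf : ℝ) : Prop :=
  ∀ lam : ℝ, 0 < lam → lam < lf →
    ∃ b : ℝ, ∀ y : H, (b : EReal) ≤ f y + ((1 / (2 * lam) * ‖y‖ ^ 2 : ℝ) : EReal)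

section Aux

variable {E : Type*} [NormedAddCommGroup E] [InnerProductSpace ℝ E] [CompleteSpace E]

lemma frb_descent_lemma (g : E → ℝ) (g' : E → E) (hdiff : ∀ x, HasGradientAt g (g' x) x)
    (L : ℝ) (hlip : ∀ x y, ‖g' x - g' y‖ ≤ L * ‖x - y‖) (p q : E) :
    g q ≤ g p + inner ℝ (g' p) (q - p) + L / 2 * ‖q - p‖ ^ 2 := by
  set d := q - p with hd
  have hline : ∀ t : ℝ, HasDerivAt (fun t : ℝ => g (p + t • d))
      (inner ℝ (g' (p + t • d)) d : ℝ) t := by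
    intro t
    have h1 : HasDerivAt (fun t : ℝ => p + t • d) d t := by
      simpa using ((hasDerivAt_id t).smul_const d).const_add p
    have h2 := (hdiff (p + t • d)).hasFDerivAt.comp_hasDerivAt t h1
    simp only [InnerProductSpace.toDual_apply_apply] at h2
    exact h2
  set ψ : ℝ → ℝ := fun t => g p + t * inner ℝ (g' p) d + L / 2 * t ^ 2 * ‖d‖ ^ 2 - g (p + t • d)
    with hψdef
  have hψ : ∀ t : ℝ, HasDerivAt ψ
      (inner ℝ (g' p) d + L / 2 * (2 * t) * ‖d‖ ^ 2 - inner ℝ (g' (p + t • d)) d) t := by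
    intro t
    have h1 : HasDerivAt (fun t : ℝ => g p + t * inner ℝ (g' p) d + L / 2 * t ^ 2 * ‖d‖ ^ 2)
        (inner ℝ (g' p) d + L / 2 * (2 * t) * ‖d‖ ^ 2) t := by
      have := (((hasDerivAt_id t).mul_const (inner ℝ (g' p) d : ℝ)).const_add (g p)).add
        ((((hasDerivAt_pow 2 t)).const_mul (L / 2)).mul_const (‖d‖ ^ 2))
      exact this.congr_deriv (by push_cast; ring)
    exact h1.sub (hline t)
  have hmono : MonotoneOn ψ (Set.Icc 0 1) := by
    apply monotoneOn_of_deriv_nonneg (convex_Icc 0 1)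
    · exact fun t _ => (hψ t).differentiableAt.continuousAt.continuousWithinAt
    · exact fun t _ => (hψ t).differentiableAt.differentiableWithinAt
    · intro t ht
      rw [interior_Icc] at ht
      rw [(hψ t).deriv]
      have h2 : (inner ℝ (g' (p + t • d)) d : ℝ) - inner ℝ (g' p) d
          = inner ℝ (g' (p + t • d) - g' p) d := by rw [inner_sub_left]
      have h1 : (inner ℝ (g' (p + t • d)) d : ℝ) - inner ℝ (g' p) d ≤ L * t * ‖d‖ ^ 2 := by
        rw [h2]
        calc (inner ℝ (g' (p + t • d) - g' p) d : ℝ) ≤ ‖g' (p + t • d) - g' p‖ * ‖d‖ :=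
              real_inner_le_norm _ _
          _ ≤ (L * ‖(p + t • d) - p‖) * ‖d‖ :=
              mul_le_mul_of_nonneg_right (hlip _ _) (norm_nonneg _)
          _ = L * t * ‖d‖ ^ 2 := by
              rw [add_sub_cancel_left, norm_smul]
              simp [abs_of_pos ht.1]; ring
      nlinarith
  have h01 := hmono (Set.mem_Icc.2 ⟨le_rfl, zero_le_one⟩) (Set.mem_Icc.2 ⟨zero_le_one, le_rfl⟩)
    zero_le_one
  simp only [hψdef] at h01
  simp only [zero_smul, add_zero, one_smul, zero_mul, zero_pow, mul_zero, one_mul, one_pow,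
    mul_one, add_sub_cancel] at h01
  have hpd : p + d = q := by rw [hd]; abel
  rw [hpd] at h01
  linarith

lemma frb_core_real (lam L r₀ r₁ g1 g2 A B Ie Iw nv : ℝ) (hlam : 0 < lam) (hL : 0 < L)
    (hB : 0 ≤ B)
    (h1 : r₁ + 1 / (2 * lam) * (nv - 2 * (lam * Ie - lam * Iw) + A)
      ≤ r₀ + 1 / (2 * lam) * nv)
    (h2 : g2 ≤ g1 + Iw + L / 2 * A)
    (h3 : Ie ≤ L / 2 * (A + B)) :
    r₁ + (g2 + 1 / (4 * lam) * A) + (1 / (4 * lam) - L) * (A + B)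
      ≤ r₀ + (g1 + 1 / (4 * lam) * B) := by
  have e1 : 1 / (2 * lam) * (nv - 2 * (lam * Ie - lam * Iw) + A) - 1 / (2 * lam) * nv
      = -Ie + Iw + (1 / (4 * lam) + 1 / (4 * lam)) * A := by
    field_simp
    ring
  have h1' : r₁ + (-Ie + Iw + (1 / (4 * lam) + 1 / (4 * lam)) * A) ≤ r₀ := by linarith
  have hLB : 0 ≤ L * B := mul_nonneg hL.le hB
  nlinarith [h1', h2, h3, hLB]

end Aux

open Filter Topology

noncomputable section

variable {n : ℕ}

theorem frb_merit_monotone_and_summable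
    (f : EuclideanSpace ℝ (Fin n) → EReal)
    (hproper : ProperFn f) (hlsc : LowerSemicontinuous f)
    (lf : ℝ) (hlf : 0 < lf) (hpb : ProxBddWith f lf)
    (g : EuclideanSpace ℝ (Fin n) → ℝ)
    (g' : EuclideanSpace ℝ (Fin n) → EuclideanSpace ℝ (Fin n))
    (hdiff : ∀ x, HasGradientAt g (g' x) x)
    (L : ℝ) (hL : 0 < L) (hlip : ∀ x y, ‖g' x - g' y‖ ≤ L * ‖x - y‖)
    (lam : ℝ) (hlam0 : 0 < lam) (hlam1 : lam < 1 / (4 * L)) (hlam2 : lam < lf)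
    (hinf : ∃ b : ℝ, ∀ x, (b : EReal) ≤ f x + (g x : EReal))
    (x : ℕ → EuclideanSpace ℝ (Fin n))
    (hscheme : ∀ k : ℕ, 1 ≤ k →
      x (k + 1) ∈ Prox lam f
        (x k + lam • (g' (x (k - 1)) - g' (x k)) - lam • g' (x k)))
    (z : ℕ → WithLp 2 (EuclideanSpace ℝ (Fin n) × EuclideanSpace ℝ (Fin n)))
    (hz : ∀ k, z k = (WithLp.equiv 2 _).symm (x (k + 1), x k))
    (Hf : WithLp 2 (EuclideanSpace ℝ (Fin n) × EuclideanSpace ℝ (Fin n)) → EReal)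
    (hH : ∀ p, Hf p =
      f ((WithLp.equiv 2 _ p).1) +
        ((g ((WithLp.equiv 2 _ p).1) +
          1 / (4 * lam) * ‖(WithLp.equiv 2 _ p).1 - (WithLp.equiv 2 _ p).2‖ ^ 2 : ℝ) : EReal)) :
    (∀ k : ℕ, 1 ≤ k → Hf (z k) ≤ Hf (z (k - 1))) ∧
    (∃ l : EReal, Tendsto (fun k => Hf (z k)) atTop (nhds l)) ∧
    Summable (fun k => ‖z (k + 1) - z k‖ ^ 2) ∧
    Tendsto (fun k => ‖z (k + 1) - z k‖) atTop (nhds 0) := by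
  obtain ⟨b, hb⟩ := hinf
  obtain ⟨hfbot, u₀, hu₀⟩ := hproper
  have hc : 0 < 1 / (4 * lam) - L := by
    rw [lt_div_iff₀ (by positivity : (0:ℝ) < 4 * L)] at hlam1
    rw [sub_pos, lt_div_iff₀ (by positivity : (0:ℝ) < 4 * lam)]
    nlinarith
  -- finiteness of f at prox outputs
  have hftop : ∀ k : ℕ, 1 ≤ k → f (x (k + 1)) ≠ ⊤ := by
    intro k hk htop
    have h := hscheme k hk u₀
    rw [htop, EReal.top_add_coe] at h
    rw [← EReal.coe_toReal hu₀ (hfbot u₀), ← EReal.coe_add] at h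
    exact EReal.coe_ne_top _ (top_le_iff.1 h)
  -- formula for Hf (z m)
  have hHf : ∀ m : ℕ, Hf (z m) =
      f (x (m + 1)) + ((g (x (m + 1)) + 1 / (4 * lam) * ‖x (m + 1) - x m‖ ^ 2 : ℝ) : EReal) := by
    intro m
    rw [hH (z m), hz m]
    simp
  -- norm of z-differences
  have hznorm : ∀ m : ℕ, ‖z (m + 1) - z m‖ ^ 2
      = ‖x (m + 2) - x (m + 1)‖ ^ 2 + ‖x (m + 1) - x m‖ ^ 2 := by
    intro m
    rw [hz, hz, WithLp.prod_norm_sq_eq_of_L2]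
    rfl
  -- key per-step inequality
  have key : ∀ m : ℕ, Hf (z (m + 1)) +
      (((1 / (4 * lam) - L) * ‖z (m + 1) - z m‖ ^ 2 : ℝ) : EReal) ≤ Hf (z m) := by
    intro m
    by_cases htop : f (x (m + 1)) = ⊤
    · rw [hHf m, htop, EReal.top_add_coe]
      exact le_top
    · have hsch := hscheme (m + 1) (Nat.le_add_left 1 m)
      simp only [Nat.add_sub_cancel] at hsch
      have htop1 : f (x (m + 2)) ≠ ⊤ := hftop (m + 1) (Nat.le_add_left 1 m)
      have hr0 : f (x (m + 1)) = (((f (x (m + 1))).toReal : ℝ) : EReal) :=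
        (EReal.coe_toReal htop (hfbot _)).symm
      have hr1 : f (x (m + 2)) = (((f (x (m + 2))).toReal : ℝ) : EReal) :=
        (EReal.coe_toReal htop1 (hfbot _)).symm
      set r₀ := (f (x (m + 1))).toReal
      set r₁ := (f (x (m + 2))).toReal
      set p := x (m + 1) + lam • (g' (x m) - g' (x (m + 1))) - lam • g' (x (m + 1)) with hp
      set dp := x (m + 2) - x (m + 1) with hdp
      set dm := x (m + 1) - x m with hdm
      set e := g' (x m) - g' (x (m + 1)) with he
      set w := g' (x (m + 1)) with hw
      set v := lam • e - lam • w with hv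
      have hpv1 : p - x (m + 1) = v := by rw [hp, hv]; abel
      have hpv2 : p - x (m + 2) = v - dp := by rw [hp, hv, hdp]; abel
      have hprox : r₁ + 1 / (2 * lam) * ‖v - dp‖ ^ 2 ≤ r₀ + 1 / (2 * lam) * ‖v‖ ^ 2 := by
        have h := hsch (x (m + 1))
        rw [hpv1, hpv2, hr0, hr1, ← EReal.coe_add, ← EReal.coe_add,
          EReal.coe_le_coe_iff] at h
        exact h
      have hexp : ‖v - dp‖ ^ 2 = ‖v‖ ^ 2 - 2 * inner ℝ v dp + ‖dp‖ ^ 2 :=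
        norm_sub_sq_real v dp
      have hIv : (inner ℝ v dp : ℝ) = lam * inner ℝ e dp - lam * inner ℝ w dp := by
        rw [hv, inner_sub_left, real_inner_smul_left, real_inner_smul_left]
      have hprox2 : r₁ + 1 / (2 * lam) *
          (‖v‖ ^ 2 - 2 * (lam * inner ℝ e dp - lam * inner ℝ w dp) + ‖dp‖ ^ 2)
          ≤ r₀ + 1 / (2 * lam) * ‖v‖ ^ 2 := by
        rw [← hIv, ← hexp]; exact hprox
      have hdesc : g (x (m + 2)) ≤ g (x (m + 1)) + inner ℝ w dp + L / 2 * ‖dp‖ ^ 2 :=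
        frb_descent_lemma g g' hdiff L hlip (x (m + 1)) (x (m + 2))
      have hCS : (inner ℝ e dp : ℝ) ≤ L / 2 * (‖dp‖ ^ 2 + ‖dm‖ ^ 2) := by
        have h1 : (inner ℝ e dp : ℝ) ≤ ‖e‖ * ‖dp‖ := real_inner_le_norm _ _
        have h2 : ‖e‖ ≤ L * ‖dm‖ := by
          have := hlip (x m) (x (m + 1))
          rwa [← norm_neg (x m - x (m + 1)), neg_sub] at this
        nlinarith [norm_nonneg dp, norm_nonneg dm, sq_nonneg (‖dp‖ - ‖dm‖)]
      have hcore := frb_core_real lam L r₀ r₁ (g (x (m + 1))) (g (x (m + 2)))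
        (‖dp‖ ^ 2) (‖dm‖ ^ 2) (inner ℝ e dp) (inner ℝ w dp) (‖v‖ ^ 2) hlam0 hL
        (sq_nonneg _) hprox2 hdesc hCS
      rw [hHf (m + 1), hHf m, hznorm m, hr0, hr1, ← EReal.coe_add, ← EReal.coe_add,
        ← EReal.coe_add, EReal.coe_le_coe_iff]
      exact hcore
  -- lower bound
  have hlb : ∀ m : ℕ, (b : EReal) ≤ Hf (z m) := by
    intro m
    rw [hHf m, EReal.coe_add, ← add_assoc]
    have h0 : (0 : EReal) ≤ ((1 / (4 * lam) * ‖x (m + 1) - x m‖ ^ 2 : ℝ) : EReal) := by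
      exact_mod_cast (mul_nonneg (by positivity) (sq_nonneg _) :
        (0:ℝ) ≤ 1 / (4 * lam) * ‖x (m + 1) - x m‖ ^ 2)
    exact le_trans (hb _) (le_add_of_nonneg_right h0)
  -- monotonicity
  have hmono : ∀ m : ℕ, Hf (z (m + 1)) ≤ Hf (z m) := by
    intro m
    refine le_trans (le_add_of_nonneg_right ?_) (key m)
    exact_mod_cast mul_nonneg hc.le (sq_nonneg _)
  have part1 : ∀ k : ℕ, 1 ≤ k → Hf (z k) ≤ Hf (z (k - 1)) := by
    intro k hk
    obtain ⟨m, rfl⟩ : ∃ m, k = m + 1 := ⟨k - 1, by omega⟩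
    simpa using hmono m
  have hsum : Summable (fun k => ‖z (k + 1) - z k‖ ^ 2) := by
    have hfin : ∀ m : ℕ, 1 ≤ m → Hf (z m) = (((Hf (z m)).toReal : ℝ) : EReal) := by
      intro m hm
      refine (EReal.coe_toReal ?_ ?_).symm
      · rw [hHf m, ← EReal.coe_toReal (hftop m hm) (hfbot _), ← EReal.coe_add]
        exact EReal.coe_ne_top _
      · exact ((EReal.bot_lt_coe b).trans_le (hlb m)).ne'
    set h : ℕ → ℝ := fun m => (Hf (z m)).toReal with hh
    have hstep : ∀ m : ℕ, 1 ≤ m →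
        h (m + 1) + (1 / (4 * lam) - L) * ‖z (m + 1) - z m‖ ^ 2 ≤ h m := by
      intro m hm
      have hk := key m
      rw [hfin m hm, hfin (m + 1) (Nat.le_add_left 1 m), ← EReal.coe_add,
        EReal.coe_le_coe_iff] at hk
      exact hk
    have hhb : ∀ m : ℕ, 1 ≤ m → b ≤ h m := by
      intro m hm
      have := hlb m
      rw [hfin m hm, EReal.coe_le_coe_iff] at this
      exact this
    have hpartial : ∀ N : ℕ,
        (∑ k ∈ Finset.range N, (1 / (4 * lam) - L) * ‖z (k + 2) - z (k + 1)‖ ^ 2)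
          + h (N + 1) ≤ h 1 := by
      intro N
      induction N with
      | zero => simp
      | succ N ih =>
        rw [Finset.sum_range_succ]
        have := hstep (N + 1) (Nat.le_add_left 1 N)
        calc (∑ k ∈ Finset.range N, (1 / (4 * lam) - L) * ‖z (k + 2) - z (k + 1)‖ ^ 2)
              + (1 / (4 * lam) - L) * ‖z (N + 2) - z (N + 1)‖ ^ 2 + h (N + 2)
            ≤ (∑ k ∈ Finset.range N, (1 / (4 * lam) - L) * ‖z (k + 2) - z (k + 1)‖ ^ 2)
              + h (N + 1) := by linarith
          _ ≤ h 1 := ih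
    have hsum2 : Summable (fun k : ℕ => ‖z (k + 1 + 1) - z (k + 1)‖ ^ 2) := by
      apply summable_of_sum_range_le (c := (h 1 - b) / (1 / (4 * lam) - L))
        (fun k => sq_nonneg _)
      intro N
      rw [le_div_iff₀ hc, Finset.sum_mul]
      have h1 := hpartial N
      have h2 := hhb (N + 1) (Nat.le_add_left 1 N)
      calc (∑ k ∈ Finset.range N, ‖z (k + 1 + 1) - z (k + 1)‖ ^ 2 * (1 / (4 * lam) - L))
          = ∑ k ∈ Finset.range N, (1 / (4 * lam) - L) * ‖z (k + 2) - z (k + 1)‖ ^ 2 := by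
            apply Finset.sum_congr rfl
            intro k _
            ring_nf
        _ ≤ h 1 - b := by linarith
    exact (summable_nat_add_iff 1).1 hsum2
  refine ⟨part1, ⟨_, tendsto_atTop_iInf (antitone_nat_of_succ_le hmono)⟩, hsum, ?_⟩
  have hsq := hsum.tendsto_atTop_zero
  have hcomp : Tendsto (fun k => Real.sqrt (‖z (k + 1) - z k‖ ^ 2)) atTop
      (nhds (Real.sqrt 0)) := (Real.continuous_sqrt.tendsto 0).comp hsq
  simpa [Real.sqrt_sq (norm_nonneg _)] using hcomp
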